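/- Nonemptiness of the t-EER path: if the CM score CDFs G_bona and G_spf are continuous, then for every spoof prevalence prior ρ ∈ [0,1] there exists a threshold pair (τ_asv, τ_cm) ∈ ℝ² lying on the t-EER path Ω(ρ), i.e. with P_miss^tdm(τ_asv, τ_cm) = P_fa,ρ^tdm(τ_asv, τ_cm). -/

import Mathlib

open MeasureTheory ProbabilityTheory Filter Topology Set

/-- ASV miss rate at threshold `τ` (target score distribution `μtar`): `F_tar(τ)`. -/
noncomputable def PmissAsv (μtar : Measure ℝ) (τ : ℝ) : ℝ := cdf μtar τ

/-- ASV nontarget false alarm rate: `1 − F_non(τ)`. -/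
noncomputable def PfaNonAsv (μnon : Measure ℝ) (τ : ℝ) : ℝ := 1 - cdf μnon τ

/-- ASV spoof false alarm rate: `1 − F_spf(τ)`. -/
noncomputable def PfaSpfAsv (μspf : Measure ℝ) (τ : ℝ) : ℝ := 1 - cdf μspf τ

/-- CM miss rate: `G_bona(τ)`. -/
noncomputable def PmissCm (νbona : Measure ℝ) (τ : ℝ) : ℝ := cdf νbona τ

/-- CM false alarm rate: `1 − G_spf(τ)`. -/
noncomputable def PfaCm (νspf : Measure ℝ) (τ : ℝ) : ℝ := 1 - cdf νspf τ

/-- Tandem miss rate under the AND rule. -/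
noncomputable def PmissTdm (μtar νbona : Measure ℝ) (τasv τcm : ℝ) : ℝ :=
  PmissCm νbona τcm + PmissAsv μtar τasv - PmissCm νbona τcm * PmissAsv μtar τasv

/-- Tandem nontarget false alarm rate under the AND rule. -/
noncomputable def PfaNonTdm (μnon νbona : Measure ℝ) (τasv τcm : ℝ) : ℝ :=
  (1 - PmissCm νbona τcm) * PfaNonAsv μnon τasv

/-- Tandem spoof false alarm rate under the AND rule. -/
noncomputable def PfaSpfTdm (μspf νspf : Measure ℝ) (τasv τcm : ℝ) : ℝ :=
  PfaCm νspf τcm * PfaSpfAsv μspf τasv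

/-- Total tandem false alarm rate for spoof prevalence prior `ρ`. -/
noncomputable def PfaRhoTdm (μnon μspf νbona νspf : Measure ℝ) (ρ τasv τcm : ℝ) : ℝ :=
  (1 - ρ) * PfaNonTdm μnon νbona τasv τcm + ρ * PfaSpfTdm μspf νspf τasv τcm

/-- The t-EER path `Ω(ρ)`. -/
noncomputable def tEERpath (μtar μnon μspf νbona νspf : Measure ℝ) (ρ : ℝ) : Set (ℝ × ℝ) :=
  {τ : ℝ × ℝ | PmissTdm μtar νbona τ.1 τ.2 = PfaRhoTdm μnon μspf νbona νspf ρ τ.1 τ.2}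

/-- Nonemptiness of the t-EER path: if the CM score CDFs are continuous, then for every
`ρ ∈ [0,1]` the t-EER path `Ω(ρ)` contains at least one threshold pair. -/
theorem teer_path_nonempty (μtar μnon μspf νbona νspf : Measure ℝ)
    [IsProbabilityMeasure μtar] [IsProbabilityMeasure μnon] [IsProbabilityMeasure μspf]
    [IsProbabilityMeasure νbona] [IsProbabilityMeasure νspf]
    (hbona : Continuous fun x => cdf νbona x)
    (hspf : Continuous fun x => cdf νspf x) :
    ∀ ρ : ℝ, 0 ≤ ρ → ρ ≤ 1 →
      ∃ τ : ℝ × ℝ, τ ∈ tEERpath μtar μnon μspf νbona νspf ρ := by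
  intro ρ hρ0 hρ1
  -- Step 1: choose τasv with v τasv < 0
  set v : ℝ → ℝ := fun x =>
    cdf μtar x - (1 - ρ) * (1 - cdf μnon x) - ρ * (1 - cdf μspf x) with hv_def
  have hv_tend : Tendsto v atBot (𝓝 (0 - (1 - ρ) * (1 - 0) - ρ * (1 - 0))) := by
    exact ((tendsto_cdf_atBot μtar).sub
      ((tendsto_const_nhds.sub (tendsto_cdf_atBot μnon)).const_mul _)).sub
      ((tendsto_const_nhds.sub (tendsto_cdf_atBot μspf)).const_mul _)
  have hlim : (0 : ℝ) - (1 - ρ) * (1 - 0) - ρ * (1 - 0) = -1 := by ring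
  rw [hlim] at hv_tend
  obtain ⟨τasv, hτasv⟩ := (hv_tend.eventually_lt_const (by norm_num : (-1 : ℝ) < 0)).exists
  -- Step 2: IVT in τcm
  set A : ℝ := cdf μtar τasv
  set B : ℝ := 1 - cdf μnon τasv
  set C : ℝ := 1 - cdf μspf τasv
  set h : ℝ → ℝ := fun y =>
    PmissTdm μtar νbona τasv y - PfaRhoTdm μnon μspf νbona νspf ρ τasv y with hh_def
  have hh_eq : ∀ y, h y = cdf νbona y + A - cdf νbona y * A
      - ((1 - ρ) * ((1 - cdf νbona y) * B) + ρ * ((1 - cdf νspf y) * C)) := by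
    intro y
    simp only [hh_def, PmissTdm, PfaRhoTdm, PfaNonTdm, PfaSpfTdm, PmissCm, PmissAsv,
      PfaNonAsv, PfaSpfAsv, PfaCm]
    rfl
  have hcont : Continuous h := by
    have : Continuous fun y => cdf νbona y + A - cdf νbona y * A
        - ((1 - ρ) * ((1 - cdf νbona y) * B) + ρ * ((1 - cdf νspf y) * C)) := by
      fun_prop
    exact ((funext hh_eq : h = _) ▸ this)
  have htendBot : Tendsto h atBot (𝓝 (0 + A - 0 * A
      - ((1 - ρ) * ((1 - 0) * B) + ρ * ((1 - 0) * C)))) := by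
    simp only [funext hh_eq]
    exact (((tendsto_cdf_atBot νbona).add_const A).sub
        ((tendsto_cdf_atBot νbona).mul_const A)).sub
      ((((tendsto_const_nhds.sub (tendsto_cdf_atBot νbona)).mul_const B).const_mul _).add
        (((tendsto_const_nhds.sub (tendsto_cdf_atBot νspf)).mul_const C).const_mul _))
  have hbotval : (0 : ℝ) + A - 0 * A - ((1 - ρ) * ((1 - 0) * B) + ρ * ((1 - 0) * C))
      = v τasv := by simp only [hv_def]; ring
  rw [hbotval] at htendBot
  have htendTop : Tendsto h atTop (𝓝 (1 + A - 1 * A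
      - ((1 - ρ) * ((1 - 1) * B) + ρ * ((1 - 1) * C)))) := by
    simp only [funext hh_eq]
    exact (((tendsto_cdf_atTop νbona).add_const A).sub
        ((tendsto_cdf_atTop νbona).mul_const A)).sub
      ((((tendsto_const_nhds.sub (tendsto_cdf_atTop νbona)).mul_const B).const_mul _).add
        (((tendsto_const_nhds.sub (tendsto_cdf_atTop νspf)).mul_const C).const_mul _))
  have htopval : (1 : ℝ) + A - 1 * A - ((1 - ρ) * ((1 - 1) * B) + ρ * ((1 - 1) * C))
      = 1 := by ring
  rw [htopval] at htendTop
  obtain ⟨a, ha⟩ := (htendBot.eventually_lt_const hτasv).exists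
  obtain ⟨b, hb⟩ := (htendTop.eventually_const_lt (by norm_num : (0 : ℝ) < 1)).exists
  have h0mem : (0 : ℝ) ∈ Set.uIcc (h a) (h b) := by
    rw [Set.mem_uIcc]; left; exact ⟨ha.le, hb.le⟩
  obtain ⟨y, _, hy⟩ := intermediate_value_uIcc hcont.continuousOn h0mem
  exact ⟨(τasv, y), by simpa [tEERpath, hh_def, sub_eq_zero] using hy⟩
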